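/- Let ξ1, ξ2 > 0, n1, n2 ≥ 2, N = n1 + n2, w1 = ξ2/ξ1. Let k ∈ (0, π) and λ = (4/ξ2)·sin²(k/2). For 1 ≤ j ≤ N let M_{1:j} denote the top-left j × j principal submatrix of M and set ψ̃_j(λ) = ξ2^j · det(M_{1:j} − λ·I). Define A(k) = ψ̃_{n1}(λ) − w1·cos(k)·ψ̃_{n1−1}(λ) and B(k) = w1·ψ̃_{n1−1}(λ). Then ξ2^N · det(M − λ·I) · sin(k) = A(k)·sin((n2+1)k) + B(k)·sin(k)·cos((n2+1)k). -/

import Mathlib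

open Matrix Real

/-- The `(n1+n2) × (n1+n2)` two-segment tridiagonal matrix: row `i` (0-based) has
diagonal entry `2/ξ1` and nonzero off-diagonal entries `-1/ξ1` when `i < n1`, and
diagonal entry `2/ξ2` and nonzero off-diagonal entries `-1/ξ2` when `n1 ≤ i`. -/
noncomputable def twoSegMatrix (ξ1 ξ2 : ℝ) (n1 n2 : ℕ) :
    Matrix (Fin (n1 + n2)) (Fin (n1 + n2)) ℝ :=
  Matrix.of fun i j =>
    if (i : ℕ) = (j : ℕ) then 2 / (if (i : ℕ) < n1 then ξ1 else ξ2)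
    else if (i : ℕ) + 1 = (j : ℕ) ∨ (j : ℕ) + 1 = (i : ℕ) then
      -1 / (if (i : ℕ) < n1 then ξ1 else ξ2)
    else 0

/-- `ξ^j · det(A_{1:j} − λ·I)` where `A_{1:j}` is the top-left `j × j` principal
submatrix of `A` (returns `0` for out-of-range `j`). -/
noncomputable def psiTop {N : ℕ} (A : Matrix (Fin N) (Fin N) ℝ) (ξ lam : ℝ) (j : ℕ) : ℝ :=
  if h : j ≤ N then
    ξ ^ j *
      (A.submatrix (Fin.castLE h) (Fin.castLE h) -
        lam • (1 : Matrix (Fin j) (Fin j) ℝ)).det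
  else 0

lemma sum_eq_two_last {m : ℕ} (f : Fin (m + 2) → ℝ)
    (h : ∀ j : Fin (m + 2), (j : ℕ) < m → f j = 0) :
    ∑ j, f j = f ⟨m, by omega⟩ + f (Fin.last (m + 1)) := by
  have hne : (⟨m, by omega⟩ : Fin (m+2)) ≠ Fin.last (m+1) := by
    simp [Fin.ext_iff, Fin.last]
  rw [← Finset.sum_pair hne]
  refine (Finset.sum_subset (Finset.subset_univ _) ?_).symm
  intro x _ hx
  apply h
  simp only [Finset.mem_insert, Finset.mem_singleton] at hx
  push_neg at hx
  obtain ⟨h1, h2⟩ := hx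
  have := x.isLt
  simp only [Ne, Fin.ext_iff, Fin.last] at h1 h2
  omega

lemma tridiag_det_step {n : ℕ} (B : Matrix (Fin (n + 2)) (Fin (n + 2)) ℝ)
    (hr : ∀ i : Fin (n + 2), (i : ℕ) < n → B (Fin.last (n + 1)) i = 0)
    (hc : ∀ i : Fin (n + 2), (i : ℕ) < n → B i (Fin.last (n + 1)) = 0) :
    B.det = B (Fin.last (n + 1)) (Fin.last (n + 1)) *
        (B.submatrix (Fin.castLE (by omega)) (Fin.castLE (by omega) : Fin (n + 1) → Fin (n + 2))).det
      - B (Fin.last (n + 1)) ⟨n, by omega⟩ * B ⟨n, by omega⟩ (Fin.last (n + 1)) *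
        (B.submatrix (Fin.castLE (by omega)) (Fin.castLE (by omega) : Fin n → Fin (n + 2))).det := by
  have hcs : (Fin.castSucc : Fin (n+1) → Fin (n+2)) = Fin.castLE (by omega) := by
    ext x; simp [Fin.castSucc, Fin.castAdd, Fin.castLE]
  have hcs2 : ((Fin.castSucc ∘ Fin.castSucc) : Fin n → Fin (n+2)) = Fin.castLE (by omega) := by
    ext x; simp [Fin.castSucc, Fin.castAdd, Fin.castLE]
  rw [Matrix.det_succ_row B (Fin.last (n+1))]
  rw [sum_eq_two_last _ (fun j hj => by
    rw [hr j hj]; ring)]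
  -- second term: j = last
  have hlast : (Fin.last (n+1)).succAbove = Fin.castSucc := Fin.succAbove_last
  -- compute term for j = ⟨n, _⟩
  set p : Fin (n+2) := ⟨n, by omega⟩ with hp
  have hC : (B.submatrix Fin.castSucc p.succAbove).det
      = B p (Fin.last (n+1)) *
        (B.submatrix (Fin.castLE (by omega)) (Fin.castLE (by omega) : Fin n → Fin (n + 2))).det := by
    rw [Matrix.det_succ_column (B.submatrix Fin.castSucc p.succAbove) (Fin.last n)]
    rw [Fintype.sum_eq_single (Fin.last n) (fun i hi => by
      have hi' : (i : ℕ) < n := by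
        have := i.isLt
        have : (i:ℕ) ≠ n := fun h => hi (by ext; simpa [Fin.last] using h)
        omega
      have hz : B.submatrix Fin.castSucc p.succAbove i (Fin.last n) = 0 := by
        rw [Matrix.submatrix_apply]
        have : p.succAbove (Fin.last n) = Fin.last (n+1) := by
          rw [Fin.succAbove_of_le_castSucc]
          · rfl
          · simp [hp, Fin.le_def, Fin.last]
        rw [this]
        exact hc _ (by simpa using hi')
      rw [hz]; ring)]
    have e1 : p.succAbove (Fin.last n) = Fin.last (n+1) := by
      rw [Fin.succAbove_of_le_castSucc]
      · rfl
      · simp [hp, Fin.le_def, Fin.last]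
    have e2 : (Fin.castSucc (Fin.last n)) = p := by ext; simp [Fin.last, hp]
    have hrowf : (Fin.castSucc ∘ (Fin.last n).succAbove : Fin n → Fin (n+2))
        = Fin.castLE (by omega) := by rw [Fin.succAbove_last]; exact hcs2
    have hcolf : (p.succAbove ∘ (Fin.last n).succAbove : Fin n → Fin (n+2))
        = Fin.castLE (by omega) := by
      ext x
      simp only [Function.comp_apply, Fin.succAbove_last]
      rw [Fin.succAbove_of_castSucc_lt]
      · simp [Fin.castSucc, Fin.castAdd, Fin.castLE]
      · simp [hp, Fin.lt_def, x.isLt]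
    have e3 : (B.submatrix Fin.castSucc p.succAbove).submatrix
        (Fin.last n).succAbove (Fin.last n).succAbove
        = B.submatrix (Fin.castLE (by omega)) (Fin.castLE (by omega) : Fin n → Fin (n + 2)) := by
      rw [Matrix.submatrix_submatrix, hrowf, hcolf]
    rw [e3, Matrix.submatrix_apply, e1, e2]
    have hnn : ((Fin.last n : ℕ) + (Fin.last n : ℕ)) = 2 * n := by simp [Fin.last]; ring
    rw [hnn, pow_mul]
    norm_num
  rw [hlast, hC, hcs]
  have s1 : (((Fin.last (n+1) : Fin (n+2)) : ℕ) + (p : ℕ)) = 2*n+1 := by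
    simp [hp, Fin.last]; omega
  have s2 : (((Fin.last (n+1) : Fin (n+2)) : ℕ) + ((Fin.last (n+1) : Fin (n+2)) : ℕ)) = 2*(n+1) := by
    simp [Fin.last]; omega
  rw [s1, s2]
  have o1 : (-1 : ℝ) ^ (2*n+1) = -1 := by
    rw [pow_succ, pow_mul]; norm_num
  have o2 : (-1 : ℝ) ^ (2*(n+1)) = 1 := by rw [pow_mul]; norm_num
  rw [o1, o2]
  ring


lemma submat_sub_one {N : ℕ} (M : Matrix (Fin N) (Fin N) ℝ) (lam : ℝ) {a b : ℕ}
    (hab : a ≤ b) (hb : b ≤ N) :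
    ((M.submatrix (Fin.castLE hb) (Fin.castLE hb)
        - lam • (1 : Matrix (Fin b) (Fin b) ℝ)).submatrix
      (Fin.castLE hab) (Fin.castLE hab))
    = M.submatrix (Fin.castLE (hab.trans hb)) (Fin.castLE (hab.trans hb))
        - lam • (1 : Matrix (Fin a) (Fin a) ℝ) := by
  ext x y
  simp only [Matrix.sub_apply, Matrix.submatrix_apply, Matrix.smul_apply, Matrix.one_apply,
    Fin.ext_iff, Fin.coe_castLE]
  rfl

lemma psi_rec (ξ1 ξ2 : ℝ) (hξ1 : ξ1 ≠ 0) (hξ2 : ξ2 ≠ 0) (n1 n2 : ℕ) (lam : ℝ) (j : ℕ)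
    (hj1 : n1 ≤ j + 1) (hj2 : j + 2 ≤ n1 + n2) :
    psiTop (twoSegMatrix ξ1 ξ2 n1 n2) ξ2 lam (j+2)
      = (2 - ξ2*lam) * psiTop (twoSegMatrix ξ1 ξ2 n1 n2) ξ2 lam (j+1)
        - (ξ2 / (if j < n1 then ξ1 else ξ2)) * psiTop (twoSegMatrix ξ1 ξ2 n1 n2) ξ2 lam j := by
  set M := twoSegMatrix ξ1 ξ2 n1 n2 with hM
  set c : ℝ := if j < n1 then ξ1 else ξ2 with hcdef
  have hcne : c ≠ 0 := by rw [hcdef]; split <;> assumption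
  set B : Matrix (Fin (j+2)) (Fin (j+2)) ℝ :=
    M.submatrix (Fin.castLE hj2) (Fin.castLE hj2)
      - lam • (1 : Matrix (Fin (j+2)) (Fin (j+2)) ℝ) with hB
  have hr : ∀ i : Fin (j+2), (i : ℕ) < j → B (Fin.last (j+1)) i = 0 := by
    intro i hi
    simp only [hB, hM, Matrix.sub_apply, Matrix.submatrix_apply, Matrix.smul_apply,
      Matrix.one_apply, twoSegMatrix, Matrix.of_apply, Fin.coe_castLE, Fin.ext_iff, Fin.val_last]
    rw [if_neg (by omega), if_neg (by omega), if_neg (by omega)]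
    simp
  have hc : ∀ i : Fin (j+2), (i : ℕ) < j → B i (Fin.last (j+1)) = 0 := by
    intro i hi
    simp only [hB, hM, Matrix.sub_apply, Matrix.submatrix_apply, Matrix.smul_apply,
      Matrix.one_apply, twoSegMatrix, Matrix.of_apply, Fin.coe_castLE, Fin.ext_iff, Fin.val_last]
    rw [if_neg (by omega), if_neg (by omega), if_neg (by omega)]
    simp
  have hll : B (Fin.last (j+1)) (Fin.last (j+1)) = 2/ξ2 - lam := by
    simp [hB, hM, twoSegMatrix, Matrix.one_apply, Fin.ext_iff, Fin.val_last,
      (show ¬(j+1 < n1) by omega)]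
  have hlj : B (Fin.last (j+1)) ⟨j, by omega⟩ = -1/ξ2 := by
    simp [hB, hM, twoSegMatrix, Matrix.one_apply, Fin.ext_iff, Fin.val_last,
      (show ¬(j+1 < n1) by omega), (show ¬(j+1 = j) by omega)]
  have hjl : B ⟨j, by omega⟩ (Fin.last (j+1)) = -1/c := by
    rw [hcdef]
    simp [hB, hM, twoSegMatrix, Matrix.one_apply, Fin.ext_iff, Fin.val_last,
      (show ¬(j = j+1) by omega)]
  have hdet := tridiag_det_step B hr hc
  rw [hll, hlj, hjl] at hdet
  have e1 : B.submatrix (Fin.castLE (by omega : j+1 ≤ j+2)) (Fin.castLE (by omega : j+1 ≤ j+2))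
      = M.submatrix (Fin.castLE (by omega : j+1 ≤ n1+n2)) (Fin.castLE (by omega))
        - lam • (1 : Matrix (Fin (j+1)) (Fin (j+1)) ℝ) := by
    rw [hB]; exact submat_sub_one M lam (by omega) hj2
  have e0 : B.submatrix (Fin.castLE (by omega : j ≤ j+2)) (Fin.castLE (by omega : j ≤ j+2))
      = M.submatrix (Fin.castLE (by omega : j ≤ n1+n2)) (Fin.castLE (by omega))
        - lam • (1 : Matrix (Fin j) (Fin j) ℝ) := by
    rw [hB]; exact submat_sub_one M lam (by omega) hj2
  rw [e1, e0] at hdet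
  simp only [psiTop, dif_pos hj2, dif_pos (show j+1 ≤ n1+n2 by omega),
    dif_pos (show j ≤ n1+n2 by omega)]
  rw [← hB, hdet]
  field_simp
  ring


theorem twoSeg_phase_decomposition (ξ1 ξ2 : ℝ) (hξ1 : 0 < ξ1) (hξ2 : 0 < ξ2)
    (n1 n2 : ℕ) (hn1 : 2 ≤ n1) (hn2 : 2 ≤ n2) (k : ℝ) (hk : k ∈ Set.Ioo 0 π) :
    let lam := (4 / ξ2) * Real.sin (k / 2) ^ 2
    let M := twoSegMatrix ξ1 ξ2 n1 n2
    let A := psiTop M ξ2 lam n1 - (ξ2 / ξ1) * Real.cos k * psiTop M ξ2 lam (n1 - 1)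
    let B := (ξ2 / ξ1) * psiTop M ξ2 lam (n1 - 1)
    ξ2 ^ (n1 + n2) *
        (M - lam • (1 : Matrix (Fin (n1 + n2)) (Fin (n1 + n2)) ℝ)).det * Real.sin k =
      A * Real.sin ((n2 + 1) * k) + B * Real.sin k * Real.cos ((n2 + 1) * k) := by
  intro lam M A B
  have hξ1' : ξ1 ≠ 0 := ne_of_gt hξ1
  have hξ2' : ξ2 ≠ 0 := ne_of_gt hξ2
  have hlamdef : lam = (4 / ξ2) * Real.sin (k / 2) ^ 2 := rfl
  have hMdef : M = twoSegMatrix ξ1 ξ2 n1 n2 := rfl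
  have hAdef : A = psiTop M ξ2 lam n1 - (ξ2 / ξ1) * Real.cos k * psiTop M ξ2 lam (n1 - 1) := rfl
  have hBdef : B = (ξ2 / ξ1) * psiTop M ξ2 lam (n1 - 1) := rfl
  have hc2 : Real.cos k = 1 - 2 * Real.sin (k / 2) ^ 2 := by
    have h := Real.cos_two_mul' (k / 2)
    rw [show 2 * (k / 2) = k by ring] at h
    nlinarith [Real.sin_sq_add_cos_sq (k / 2)]
  have h2c : 2 - ξ2 * lam = 2 * Real.cos k := by
    have h4 : ξ2 * lam = 4 * Real.sin (k / 2) ^ 2 := by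
      rw [hlamdef]; field_simp
    rw [h4, hc2]; ring
  have tsin : ∀ a : ℝ, Real.sin (a + k) = 2 * Real.cos k * Real.sin a - Real.sin (a - k) := by
    intro a; rw [Real.sin_add, Real.sin_sub]; ring
  have tcos : ∀ a : ℝ, Real.cos (a + k) = 2 * Real.cos k * Real.cos a - Real.cos (a - k) := by
    intro a; rw [Real.cos_add, Real.cos_sub]; ring
  have main : ∀ m, m ≤ n2 → psiTop M ξ2 lam (n1 + m) * Real.sin k
      = A * Real.sin (((m + 1 : ℕ) : ℝ) * k) + B * Real.sin k * Real.cos (((m + 1 : ℕ) : ℝ) * k) := by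
    intro m
    induction m using Nat.strong_induction_on with
    | _ m ih =>
      intro hm
      match m, ih with
      | 0, ih =>
        norm_num
        rw [hAdef, hBdef]
        ring
      | 1, ih =>
        have hstep := psi_rec ξ1 ξ2 hξ1' hξ2' n1 n2 lam (n1 - 1) (by omega) (by omega)
        rw [if_pos (by omega), show n1 - 1 + 2 = n1 + 1 by omega,
          show n1 - 1 + 1 = n1 by omega, h2c] at hstep
        rw [← hMdef] at hstep
        rw [hstep]
        norm_num
        rw [Real.sin_two_mul, Real.cos_two_mul, hAdef, hBdef]
        ring
      | (m' + 2), ih =>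
        have ih1 := ih (m' + 1) (by omega) (by omega)
        have ih0 := ih m' (by omega) (by omega)
        have hstep := psi_rec ξ1 ξ2 hξ1' hξ2' n1 n2 lam (n1 + m') (by omega) (by omega)
        rw [if_neg (by omega), div_self hξ2', h2c] at hstep
        rw [show n1 + (m' + 1) = n1 + m' + 1 from by omega] at ih1
        rw [← hMdef] at hstep
        rw [show n1 + (m' + 2) = n1 + m' + 2 from by omega, hstep]
        have e1 : ((m' + 2 + 1 : ℕ) : ℝ) * k = (((m' + 1 + 1 : ℕ) : ℝ) * k) + k := by
          push_cast; ring
        have e2 : (((m' + 1 + 1 : ℕ) : ℝ) * k) - k = ((m' + 1 : ℕ) : ℝ) * k := by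
          push_cast; ring
        rw [e1, tsin, tcos, e2]
        linear_combination (2 * Real.cos k) * ih1 - ih0
  have hfin := main n2 le_rfl
  have hpsiN : psiTop M ξ2 lam (n1 + n2)
      = ξ2 ^ (n1 + n2) * (M - lam • (1 : Matrix (Fin (n1 + n2)) (Fin (n1 + n2)) ℝ)).det := by
    simp only [psiTop, dif_pos (le_refl (n1 + n2)), Fin.castLE_rfl, Matrix.submatrix_id_id]
  rw [hpsiN] at hfin
  rw [hfin]
  push_cast
  ring
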